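/- Let f : ℝ^n → ℝ be an M-self-concordant-like function (so exp(−M‖y−x‖)∇²f(x) ⪯ ∇²f(y) for all x,y). Then for all β₁, β₂ with ‖β₁‖, ‖β₂‖ ≤ W and all u ∈ ℝ^n, uᵀ (∫₀¹ ∇²f(β₁ + z(β₂ − β₁)) dz) u ≥ (1/(1 + 2MW)) uᵀ ∇²f(β₁) u. -/
import Mathlib


/-- Directional second derivative of `f` at `x` along `u`:
`uᵀ ∇²f(x) u = d²/dt² f(x + t u) |_{t=0}`. -/
noncomputable def dirD2 {n : ℕ} (f : EuclideanSpace ℝ (Fin n) → ℝ)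
    (x u : EuclideanSpace ℝ (Fin n)) : ℝ :=
  iteratedDeriv 2 (fun t : ℝ => f (x + t • u)) 0

theorem stmt_10 (n : ℕ) (f : EuclideanSpace ℝ (Fin n) → ℝ) (M W : ℝ)
    (hM : 0 < M) (hW : 0 < W) (hf : ContDiff ℝ 3 f)
    (hsc : ∀ x y u : EuclideanSpace ℝ (Fin n),
      Real.exp (-(M * ‖y - x‖)) * dirD2 f x u ≤ dirD2 f y u) :
    ∀ β₁ β₂ : EuclideanSpace ℝ (Fin n), ‖β₁‖ ≤ W → ‖β₂‖ ≤ W →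
      ∀ u : EuclideanSpace ℝ (Fin n),
        (1 / (1 + 2 * M * W)) * dirD2 f β₁ u ≤
          ∫ z in (0:ℝ)..1, dirD2 f (β₁ + z • (β₂ - β₁)) u := by
  intro β₁ β₂ hβ₁ hβ₂ u
  -- nonnegativity of dirD2
  have hnonneg : ∀ x : EuclideanSpace ℝ (Fin n), 0 ≤ dirD2 f x u := by
    intro x
    rcases Nat.eq_zero_or_pos n with hn | hn
    · subst hn
      have hx : ∀ t : ℝ, x + t • u = x := fun t => Subsingleton.elim _ _
      have : dirD2 f x u = 0 := by
        unfold dirD2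
        simp only [hx]
        simp [iteratedDeriv_succ, iteratedDeriv_zero]
      simp [this]
    · obtain ⟨i⟩ : Nonempty (Fin n) := ⟨⟨0, hn⟩⟩
      set y := x + EuclideanSpace.single i (1 : ℝ) with hy
      have hxy : ‖y - x‖ = 1 := by
        simp [hy, EuclideanSpace.norm_single]
      have hyx : ‖x - y‖ = 1 := by
        rw [← norm_neg]; simpa using hxy
      have h1 := hsc x y u
      have h2 := hsc y x u
      rw [hxy] at h1
      rw [hyx] at h2
      set c := Real.exp (-(M * 1)) with hc
      have hc0 : 0 < c := Real.exp_pos _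
      have hc1 : c < 1 := by
        rw [hc, Real.exp_lt_one_iff]
        nlinarith
      have hcc : c * c < 1 := by nlinarith
      nlinarith [mul_le_mul_of_nonneg_left h1 hc0.le, h2, hcc]
  set d := β₂ - β₁ with hd
  set g : ℝ → ℝ := fun z => dirD2 f (β₁ + z • d) u with hg
  have hg0 : ∀ z, 0 ≤ g z := fun z => hnonneg _
  -- continuity of g via squeeze
  have hkey : ∀ z₀ z : ℝ,
      Real.exp (-(M * (|z - z₀| * ‖d‖))) * g z₀ ≤ g z ∧
      g z ≤ Real.exp (M * (|z - z₀| * ‖d‖)) * g z₀ := by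
    intro z₀ z
    have hdist : ‖(β₁ + z • d) - (β₁ + z₀ • d)‖ = |z - z₀| * ‖d‖ := by
      rw [show (β₁ + z • d) - (β₁ + z₀ • d) = (z - z₀) • d by
        rw [sub_smul]; abel]
      rw [norm_smul, Real.norm_eq_abs]
    have hdist' : ‖(β₁ + z₀ • d) - (β₁ + z • d)‖ = |z - z₀| * ‖d‖ := by
      rw [← norm_neg]
      simpa using hdist
    constructor
    · have := hsc (β₁ + z₀ • d) (β₁ + z • d) u
      rw [hdist] at this
      exact this
    · have h2 := hsc (β₁ + z • d) (β₁ + z₀ • d) u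
      rw [hdist'] at h2
      have := mul_le_mul_of_nonneg_left h2 (Real.exp_pos (M * (|z - z₀| * ‖d‖))).le
      calc g z = Real.exp (M * (|z - z₀| * ‖d‖)) *
            (Real.exp (-(M * (|z - z₀| * ‖d‖))) * g z) := by
            rw [← mul_assoc, ← Real.exp_add]; simp
        _ ≤ Real.exp (M * (|z - z₀| * ‖d‖)) * g z₀ := this
  have hcont : Continuous g := by
    rw [continuous_iff_continuousAt]
    intro z₀
    have hlo : Filter.Tendsto (fun z => Real.exp (-(M * (|z - z₀| * ‖d‖))) * g z₀)
        (nhds z₀) (nhds (g z₀)) := by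
      have hcts : Continuous fun z => Real.exp (-(M * (|z - z₀| * ‖d‖))) * g z₀ := by
        fun_prop
      have := hcts.tendsto z₀
      simpa using this
    have hhi : Filter.Tendsto (fun z => Real.exp (M * (|z - z₀| * ‖d‖)) * g z₀)
        (nhds z₀) (nhds (g z₀)) := by
      have hcts : Continuous fun z => Real.exp (M * (|z - z₀| * ‖d‖)) * g z₀ := by
        fun_prop
      have := hcts.tendsto z₀
      simpa using this
    exact tendsto_of_tendsto_of_tendsto_of_le_of_le hlo hhi
      (fun z => (hkey z₀ z).1) (fun z => (hkey z₀ z).2)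
  set c := 2 * M * W with hcdef
  have hc0 : 0 < c := by positivity
  clear_value c
  set A := dirD2 f β₁ u with hA
  have hA0 : 0 ≤ A := hnonneg _
  have hdW : ‖d‖ ≤ 2 * W := by
    calc ‖d‖ ≤ ‖β₂‖ + ‖β₁‖ := norm_sub_le _ _
      _ ≤ 2 * W := by linarith
  -- pointwise bound on [0,1]
  have hpt : ∀ z ∈ Set.Icc (0:ℝ) 1, Real.exp (-(c * z)) * A ≤ g z := by
    intro z hz
    have h1 := hsc β₁ (β₁ + z • d) u
    have hdist : ‖(β₁ + z • d) - β₁‖ = z * ‖d‖ := by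
      rw [show (β₁ + z • d) - β₁ = z • d by abel]
      rw [norm_smul, Real.norm_eq_abs, abs_of_nonneg hz.1]
    rw [hdist] at h1
    refine le_trans ?_ h1
    apply mul_le_mul_of_nonneg_right _ hA0
    apply Real.exp_le_exp.2
    rw [neg_le_neg_iff]
    calc M * (z * ‖d‖) ≤ M * (z * (2 * W)) := by
          apply mul_le_mul_of_nonneg_left _ hM.le
          exact mul_le_mul_of_nonneg_left hdW hz.1
      _ = c * z := by rw [hcdef]; ring
  -- compute the exponential integral
  have hint : (∫ z in (0:ℝ)..1, Real.exp (-(c * z)) * A)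
      = (1 - Real.exp (-c)) / c * A := by
    rw [intervalIntegral.integral_mul_const]
    congr 1
    have : (fun z : ℝ => Real.exp (-(c * z))) = fun z : ℝ => Real.exp ((-c) * z) := by
      funext z; ring_nf
    rw [this]
    rw [intervalIntegral.integral_comp_mul_left Real.exp (by linarith : (-c) ≠ 0)]
    rw [integral_exp]
    simp only [mul_zero, mul_one, smul_eq_mul]
    rw [Real.exp_zero]
    rw [eq_div_iff hc0.ne', inv_neg, neg_mul, neg_mul, mul_comm ((c:ℝ)⁻¹), mul_assoc,
      inv_mul_cancel₀ hc0.ne']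
    ring
  -- integrability
  have hi1 : IntervalIntegrable (fun z => Real.exp (-(c * z)) * A) MeasureTheory.volume 0 1 := by
    apply Continuous.intervalIntegrable; fun_prop
  have hi2 : IntervalIntegrable g MeasureTheory.volume 0 1 :=
    hcont.intervalIntegrable 0 1
  have hmono := intervalIntegral.integral_mono_on (by norm_num : (0:ℝ) ≤ 1) hi1 hi2 hpt
  rw [hint] at hmono
  refine le_trans ?_ hmono
  -- coefficient inequality
  apply mul_le_mul_of_nonneg_right _ hA0
  rw [div_le_div_iff₀ (by linarith) hc0]
  have he : Real.exp (-c) * Real.exp c = 1 := by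
    rw [← Real.exp_add]; simp
  nlinarith [Real.add_one_le_exp c, Real.exp_pos c, Real.exp_pos (-c)]
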